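/- Let p ≥ 1 be an integer, let e_p be a primitive p-th root of unity in ℂ, and let m ≥ 1 be an integer. Then for every natural number k and every natural number n with 0 ≤ n ≤ p−1, the chain sum satisfies T_m(k·p + n ; e_p) = m^k · T_m(n ; e_p). -/

import Mathlib

/-- Evaluation at `ζ : ℂ` of the Gaussian binomial coefficient `[n choose k]_q ∈ ℤ[q]`,
defined by the `q`-Pascal recursion, agreeing with
`∏_{i=1}^{k} (1−q^{n−k+i})/(1−q^i)` for `k ≤ n` and with `0` for `k > n`. -/
def qbinom : ℕ → ℕ → ℂ → ℂ
  | _, 0, _ => 1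
  | 0, _ + 1, _ => 0
  | n + 1, k + 1, ζ => qbinom n k ζ + ζ ^ (k + 1) * qbinom n (k + 1) ζ

lemma qbinom_zero_right (n : ℕ) (ζ : ℂ) : qbinom n 0 ζ = 1 := by
  cases n <;> rfl

lemma qbinom_eq_zero {n k : ℕ} (h : n < k) (ζ : ℂ) : qbinom n k ζ = 0 := by
  induction n generalizing k with
  | zero => obtain ⟨k, rfl⟩ := Nat.exists_eq_add_of_lt h; rfl
  | succ n ih =>
    obtain ⟨k, rfl⟩ : ∃ j, k = j + 1 := ⟨k - 1, by omega⟩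
    show qbinom n k ζ + ζ ^ (k+1) * qbinom n (k+1) ζ = 0
    rw [ih (by omega), ih (by omega)]; ring

lemma qbinom_self (n : ℕ) (ζ : ℂ) : qbinom n n ζ = 1 := by
  induction n with
  | zero => rfl
  | succ n ih =>
    show qbinom n n ζ + ζ ^ (n+1) * qbinom n (n+1) ζ = 1
    rw [ih, qbinom_eq_zero (by omega)]; ring

noncomputable def qD (j : ℕ) (ζ : ℂ) : ℂ := ∏ i ∈ Finset.range j, (1 - ζ ^ (i + 1))

lemma qD_succ (j : ℕ) (ζ : ℂ) : qD (j+1) ζ = qD j ζ * (1 - ζ ^ (j+1)) := by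
  simp [qD, Finset.prod_range_succ]

lemma qbinom_mul_qD {n k : ℕ} (h : k ≤ n) (ζ : ℂ) :
    qbinom n k ζ * (qD k ζ * qD (n - k) ζ) = qD n ζ := by
  induction n generalizing k with
  | zero =>
    interval_cases k; simp [qbinom_zero_right, qD]
  | succ n ih =>
    rcases Nat.eq_zero_or_pos k with rfl | hk
    · simp [qbinom_zero_right, qD]
    obtain ⟨k, rfl⟩ : ∃ j, k = j + 1 := ⟨k - 1, by omega⟩
    show (qbinom n k ζ + ζ ^ (k+1) * qbinom n (k+1) ζ) * (qD (k+1) ζ * qD (n+1-(k+1)) ζ) = _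
    rcases eq_or_lt_of_le h with heq | hlt
    · obtain rfl : k = n := by omega
      rw [qbinom_self, qbinom_eq_zero (by omega)]
      simp [qD]
    · have hk1 : k + 1 ≤ n := by omega
      have e1 : n + 1 - (k+1) = (n - (k+1)) + 1 := by omega
      have e2 : n - k = (n - (k+1)) + 1 := by omega
      have e3 : ζ ^ (n+1) = ζ ^ (k+1) * ζ ^ ((n - (k+1)) + 1) := by
        rw [← pow_add]; congr 1; omega
      have h1 := ih (k := k) (by omega)
      have h2 := ih (k := k+1) hk1
      rw [e2, qD_succ] at h1; rw [qD_succ] at h2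
      rw [e1, qD_succ (n - (k+1)), qD_succ k, qD_succ n]
      linear_combination (1 - ζ^(k+1)) * h1 + ζ^(k+1) * (1 - ζ^(n-(k+1)+1)) * h2 + qD n ζ * e3
section
variable {p : ℕ} {e : ℂ} (he : IsPrimitiveRoot e p)
include he

lemma qD_ne_zero (hp : 0 < p) {j : ℕ} (hj : j < p) : qD j e ≠ 0 := by
  rw [qD, Finset.prod_ne_zero_iff]
  intro i hi
  simp only [Finset.mem_range] at hi
  intro h
  have : e ^ (i+1) = 1 := by linear_combination -h
  exact he.pow_ne_one_of_pos_of_lt (by omega) (by omega) this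

lemma qD_p_eq_zero (hp : 0 < p) : qD p e = 0 := by
  obtain ⟨p, rfl⟩ : ∃ j, p = j + 1 := ⟨p - 1, by omega⟩
  rw [qD_succ, he.pow_eq_one, sub_self, mul_zero]

lemma qbinom_p_eq_zero {j : ℕ} (hj0 : 0 < j) (hjp : j < p) : qbinom p j e = 0 := by
  have hp : 0 < p := by omega
  have h := qbinom_mul_qD (le_of_lt hjp) e
  rw [qD_p_eq_zero he hp] at h
  have h1 := qD_ne_zero he hp hjp
  have h2 := qD_ne_zero he hp (show p - j < p by omega)
  rcases mul_eq_zero.mp h with h | h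
  · exact h
  · rcases mul_eq_zero.mp h with h | h
    · exact absurd h h1
    · exact absurd h h2

end
section
variable {p : ℕ} {e : ℂ} (he : IsPrimitiveRoot e p)
include he

lemma qbinom_add_p (hp : 0 < p) (n k : ℕ) :
    qbinom (n + p) k e = qbinom n k e + (if p ≤ k then qbinom n (k - p) e else 0) := by
  induction n generalizing k with
  | zero =>
    simp only [Nat.zero_add]
    rcases Nat.eq_zero_or_pos k with rfl | hk
    · rw [if_neg (by omega), qbinom_zero_right, qbinom_zero_right]; ring
    rcases lt_trichotomy k p with h | rfl | h
    · rw [if_neg (by omega), qbinom_p_eq_zero he hk h, qbinom_eq_zero hk]; ring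
    · rw [if_pos le_rfl, qbinom_self, qbinom_eq_zero hk, Nat.sub_self, qbinom_zero_right]; ring
    · rw [if_pos (le_of_lt h), qbinom_eq_zero h, qbinom_eq_zero (show 0 < k - p by omega),
        qbinom_eq_zero hk]; ring
  | succ n ih =>
    rcases Nat.eq_zero_or_pos k with rfl | hk
    · rw [if_neg (by omega), qbinom_zero_right, qbinom_zero_right]; ring
    obtain ⟨k, rfl⟩ : ∃ j, k = j + 1 := ⟨k - 1, by omega⟩
    have hstep : n + 1 + p = (n + p) + 1 := by omega
    rw [hstep]
    show qbinom (n+p) k e + e ^ (k+1) * qbinom (n+p) (k+1) e = _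
    rw [ih k, ih (k+1)]
    show _ = qbinom n k e + e ^ (k+1) * qbinom n (k+1) e +
      (if p ≤ k + 1 then qbinom (n+1) (k+1-p) e else 0)
    rcases lt_trichotomy p (k+1) with h | rfl | h
    · have hpk : p ≤ k := by omega
      have e1 : k + 1 - p = (k - p) + 1 := by omega
      have e2 : e ^ (k + 1) = e ^ ((k - p) + 1) := by
        have : k + 1 = ((k-p)+1) + p := by omega
        rw [this, pow_add, he.pow_eq_one, mul_one]
      rw [if_pos hpk, if_pos (by omega), if_pos (by omega), e1]
      show _ = qbinom n k e + e ^ (k+1) * qbinom n (k+1) e +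
        (qbinom n (k-p) e + e ^ ((k-p)+1) * qbinom n ((k-p)+1) e)
      rw [← e2]
      ring
    · rw [if_neg (by omega), if_pos (by omega), if_pos le_rfl, Nat.sub_self,
        qbinom_zero_right, qbinom_zero_right]
      have : e ^ (k + 1) = 1 := he.pow_eq_one
      rw [this]; ring
    · rw [if_neg (by omega), if_neg (by omega), if_neg (by omega)]; ring

lemma qbinom_lucas (hp : 0 < p) (a c : ℕ) {b d : ℕ} (hb : b < p) (hd : d < p) :
    qbinom (a * p + b) (c * p + d) e = (a.choose c : ℂ) * qbinom b d e := by
  induction a generalizing c with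
  | zero =>
    rcases Nat.eq_zero_or_pos c with rfl | hc
    · simp
    · rw [show 0 * p + b = b from by ring, qbinom_eq_zero (show b < c * p + d by nlinarith),
        Nat.choose_eq_zero_of_lt (by omega)]
      simp
  | succ a ih =>
    have e1 : (a+1) * p + b = (a * p + b) + p := by ring
    rw [e1, qbinom_add_p he hp]
    rcases Nat.eq_zero_or_pos c with rfl | hc
    · rw [if_neg (by omega), ih 0]
      simp
    · obtain ⟨c, rfl⟩ : ∃ j, c = j + 1 := ⟨c - 1, by omega⟩
      rw [if_pos (by nlinarith), show (c+1) * p + d - p = c * p + d by ring_nf; omega,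
        ih (c+1), ih c, Nat.choose_succ_succ]
      push_cast
      ring

end
/-- The chain sum `T_{m+1}(N;q)`: the sum over integer sequences
`N = t_{m+1} ≥ t_m ≥ … ≥ t_1 ≥ 0` of `∏_{j=1}^{m} q^{t_j(t_j+1)} [t_{j+1} choose t_j]_q`,
where a chain is encoded as a monotone function `f : Fin (m+1) → Fin (N+1)`
with top value `N` (so `f i = t_{i+1}`). -/
noncomputable def chainT (m N : ℕ) (q : ℂ) : ℂ :=
  ∑ f ∈ Finset.univ.filter
      (fun f : Fin (m + 1) → Fin (N + 1) => Monotone f ∧ f (Fin.last m) = Fin.last N),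
    ∏ i : Fin m,
      q ^ ((f i.castSucc : ℕ) * ((f i.castSucc : ℕ) + 1)) *
        qbinom (f i.succ : ℕ) (f i.castSucc : ℕ) q

lemma chainT_zero (N : ℕ) (q : ℂ) : chainT 0 N q = 1 := by
  rw [chainT]
  have h : (Finset.univ.filter (fun f : Fin 1 → Fin (N+1) =>
      Monotone f ∧ f (Fin.last 0) = Fin.last N)) = {fun _ => Fin.last N} := by
    ext f
    simp only [Finset.mem_filter, Finset.mem_univ, true_and, Finset.mem_singleton]
    constructor
    · rintro ⟨-, h⟩
      funext i
      rw [Subsingleton.elim i (Fin.last 0), h]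
    · rintro rfl
      exact ⟨monotone_const, rfl⟩
  rw [h, Finset.sum_singleton]
  simp

lemma chainT_fiber (m N : ℕ) (q : ℂ) (t : Fin (N+1)) :
    ∑ f ∈ (Finset.univ.filter (fun f : Fin (m+1+1) → Fin (N+1) =>
        Monotone f ∧ f (Fin.last (m+1)) = Fin.last N)).filter
        (fun f => f (Fin.castSucc (Fin.last m)) = t),
      (∏ i : Fin (m+1), q ^ ((f i.castSucc : ℕ) * ((f i.castSucc : ℕ) + 1)) *
        qbinom (f i.succ : ℕ) (f i.castSucc : ℕ) q)
    = q ^ ((t:ℕ) * ((t:ℕ)+1)) * qbinom N (t:ℕ) q * chainT m (t:ℕ) q := by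
  have ht : (t:ℕ) + 1 ≤ N + 1 := t.isLt
  rw [chainT, Finset.mul_sum]
  refine Finset.sum_bij'
    (i := fun f _ => (fun j : Fin (m+1) => (⟨min (f (Fin.castSucc j) : ℕ) (t:ℕ),
      Nat.lt_succ_iff.mpr (min_le_right _ _)⟩ : Fin ((t:ℕ)+1))))
    (j := fun g _ => Fin.snoc (fun j : Fin (m+1) => Fin.castLE ht (g j)) (Fin.last N))
    ?_ ?_ ?_ ?_ ?_
  · -- forward membership
    intro f hf
    simp only [Finset.mem_filter, Finset.mem_univ, true_and] at hf ⊢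
    obtain ⟨⟨hmono, -⟩, hfib⟩ := hf
    constructor
    · intro a b hab
      simp only [Fin.mk_le_mk, Fin.le_def]
      exact min_le_min (hmono (Fin.castSucc_le_castSucc_iff.mpr hab)) le_rfl
    · apply Fin.ext
      simp [hfib]
  · -- backward membership
    intro g hg
    simp only [Finset.mem_filter, Finset.mem_univ, true_and] at hg ⊢
    obtain ⟨hmono, htop⟩ := hg
    refine ⟨⟨?_, ?_⟩, ?_⟩
    · rw [Fin.monotone_iff_le_succ]
      intro i
      induction i using Fin.lastCases with
      | last =>
        rw [Fin.succ_last, Fin.snoc_last, Fin.snoc_castSucc]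
        exact Fin.le_last _
      | cast j =>
        rw [Fin.succ_castSucc, Fin.snoc_castSucc, Fin.snoc_castSucc]
        simp only [Fin.le_def, Fin.coe_castLE]
        exact hmono (le_of_lt (Fin.castSucc_lt_succ (i := j)))
    · rw [Fin.snoc_last]
    · rw [Fin.snoc_castSucc]
      apply Fin.ext
      simp [htop]
  · -- left inverse
    intro f hf
    simp only [Finset.mem_filter, Finset.mem_univ, true_and] at hf
    obtain ⟨⟨hmono, htop⟩, hfib⟩ := hf
    funext i
    induction i using Fin.lastCases with
    | last => simp only [Fin.snoc_last]; rw [htop]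
    | cast j =>
      have hb : (f (Fin.castSucc j) : ℕ) ≤ (t : ℕ) := by
        rw [← hfib]
        exact hmono (Fin.castSucc_le_castSucc_iff.mpr (Fin.le_last j))
      simp only [Fin.snoc_castSucc]
      apply Fin.ext
      simp [min_eq_left hb]
  · -- right inverse
    intro g hg
    funext j
    apply Fin.ext
    simp only [Fin.snoc_castSucc, Fin.coe_castLE]
    have : (g j : ℕ) ≤ (t : ℕ) := Nat.lt_succ_iff.mp (g j).isLt
    simp [min_eq_left this]
  · -- summand equality
    intro f hf
    simp only [Finset.mem_filter, Finset.mem_univ, true_and] at hf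
    obtain ⟨⟨hmono, htop⟩, hfib⟩ := hf
    rw [Fin.prod_univ_castSucc]
    have hbound : ∀ j : Fin (m+1), (f (Fin.castSucc j) : ℕ) ≤ (t : ℕ) := by
      intro j
      rw [← hfib]
      exact hmono (Fin.castSucc_le_castSucc_iff.mpr (Fin.le_last j))
    have hterm : ∀ j : Fin m,
        q ^ ((f (Fin.castSucc j).castSucc : ℕ) * ((f (Fin.castSucc j).castSucc : ℕ) + 1)) *
          qbinom (f (Fin.castSucc j).succ : ℕ) (f (Fin.castSucc j).castSucc : ℕ) q
        = q ^ ((min (f (Fin.castSucc j.castSucc) : ℕ) (t:ℕ)) *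
            ((min (f (Fin.castSucc j.castSucc) : ℕ) (t:ℕ)) + 1)) *
          qbinom (min (f (Fin.castSucc j.succ) : ℕ) (t:ℕ))
            (min (f (Fin.castSucc j.castSucc) : ℕ) (t:ℕ)) q := by
      intro j
      rw [min_eq_left (hbound j.castSucc), min_eq_left (hbound j.succ)]
      rw [show (Fin.castSucc j).castSucc = Fin.castSucc j.castSucc from rfl,
        Fin.succ_castSucc]
    rw [Finset.prod_congr rfl (fun j _ => hterm j)]
    have h1 : (f ((Fin.last m).castSucc) : ℕ) = (t : ℕ) := by rw [hfib]
    have h2 : (f ((Fin.last m).succ) : ℕ) = N := by rw [Fin.succ_last, htop, Fin.val_last]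
    rw [h1, h2]
    ring
lemma chainT_succ (m N : ℕ) (q : ℂ) :
    chainT (m+1) N q = ∑ t ∈ Finset.range (N+1),
      q ^ (t * (t+1)) * qbinom N t q * chainT m t q := by
  rw [← Fin.sum_univ_eq_sum_range (fun t => q ^ (t*(t+1)) * qbinom N t q * chainT m t q) (N+1)]
  rw [chainT]
  rw [← Finset.sum_fiberwise _ (fun f : Fin (m+1+1) → Fin (N+1) => f (Fin.castSucc (Fin.last m)))
      (fun f => ∏ i : Fin (m+1), q ^ ((f i.castSucc : ℕ) * ((f i.castSucc : ℕ) + 1)) *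
        qbinom (f i.succ : ℕ) (f i.castSucc : ℕ) q)]
  exact Finset.sum_congr rfl fun t _ => chainT_fiber m N q t

lemma sum_range_mul_eq {M : Type*} [AddCommMonoid M] (a p : ℕ) (f : ℕ → M) :
    ∑ t ∈ Finset.range (a * p), f t
      = ∑ s ∈ Finset.range a, ∑ r ∈ Finset.range p, f (s * p + r) := by
  induction a with
  | zero => simp
  | succ a ih =>
    rw [show (a+1)*p = a*p + p by ring, Finset.sum_range_add, ih, Finset.sum_range_succ]

lemma main_aux {p : ℕ} {e : ℂ} (he : IsPrimitiveRoot e p) (hp : 0 < p) :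
    ∀ m k n : ℕ, n ≤ p - 1 → chainT m (k*p+n) e = ((m+1 : ℕ) : ℂ)^k * chainT m n e := by
  intro m
  induction m with
  | zero => intro k n _; simp [chainT_zero]
  | succ m ih =>
    intro k n hn
    have hnp : n < p := by omega
    rw [chainT_succ]
    have hext : ∑ t ∈ Finset.range (k*p+n+1), e^(t*(t+1)) * qbinom (k*p+n) t e * chainT m t e
        = ∑ t ∈ Finset.range ((k+1)*p), e^(t*(t+1)) * qbinom (k*p+n) t e * chainT m t e := by
      apply Finset.sum_subset
      · intro x hx
        simp only [Finset.mem_range] at hx ⊢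
        nlinarith
      · intro x hx hx'
        simp only [Finset.mem_range] at hx hx'
        rw [qbinom_eq_zero (by omega)]
        ring
    rw [hext, sum_range_mul_eq]
    have hterm : ∀ s ∈ Finset.range (k+1), ∀ r ∈ Finset.range p,
        e^((s*p+r)*((s*p+r)+1)) * qbinom (k*p+n) (s*p+r) e * chainT m (s*p+r) e
        = ((k.choose s : ℂ) * ((m+1:ℕ):ℂ)^s) * (e^(r*(r+1)) * qbinom n r e * chainT m r e) := by
      intro s hs r hr
      simp only [Finset.mem_range] at hs hr
      have h1 : e^((s*p+r)*((s*p+r)+1)) = e^(r*(r+1)) := by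
        have hexp : (s*p+r)*((s*p+r)+1) = r*(r+1) + (s*s*p + 2*s*r + s) * p := by ring
        have h0 : e ^ ((s*s*p + 2*s*r + s) * p) = 1 := by
          rw [pow_mul', he.pow_eq_one, one_pow]
        rw [hexp, pow_add, h0, mul_one]
      have h2 := qbinom_lucas he hp k s (b := n) (d := r) hnp hr
      have h3 := ih s r (by omega)
      rw [h1, h2, h3]
      ring
    rw [Finset.sum_congr rfl (fun s hs => Finset.sum_congr rfl (fun r hr => hterm s hs r hr))]
    rw [← Finset.sum_mul_sum]
    have hbin : (∑ s ∈ Finset.range (k+1), (k.choose s : ℂ) * ((m+1:ℕ):ℂ)^s)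
        = ((m+1+1:ℕ):ℂ)^k := by
      rw [show ((m+1+1:ℕ):ℂ) = ((m+1:ℕ):ℂ) + 1 by push_cast; ring, add_pow]
      exact Finset.sum_congr rfl fun s _ => by rw [one_pow, mul_one, mul_comm]
    have hchain : ∑ r ∈ Finset.range p, e^(r*(r+1)) * qbinom n r e * chainT m r e
        = chainT (m+1) n e := by
      rw [chainT_succ]
      symm
      apply Finset.sum_subset
      · intro x hx
        simp only [Finset.mem_range] at hx ⊢
        omega
      · intro x hx hx'
        simp only [Finset.mem_range] at hx hx'
        rw [qbinom_eq_zero (by omega)]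
        ring
    rw [hbin, hchain]

theorem stmt6 (p : ℕ) (hp : 1 ≤ p) (e : ℂ) (he : IsPrimitiveRoot e p)
    (m : ℕ) (hm : 1 ≤ m) (k n : ℕ) (hn : n ≤ p - 1) :
    chainT (m - 1) (k * p + n) e = (m : ℂ) ^ k * chainT (m - 1) n e := by
  have h := main_aux he (by omega) (m-1) k n hn
  rwa [show m - 1 + 1 = m by omega] at h
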